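/- Let T > 0, r ∈ ℝ, σ > 0, μ₁ > μ₂, κ > 0, and let η : [0,1] → ℝ be either η ≡ 0 or η(p) = −(q₁ + q₂)p + q₂ for some constants q₁, q₂ > 0. Define θ(p) := (μ₁ − μ₂)p + μ₂ and β(p) := ((μ₁ − μ₂)/σ) p(1 − p), and let c be the unique bounded solution, C^{1,2} on [0,T) × (0,1) and continuous up to {T} × (0,1), of the Cauchy problem ∂_t c + ( η(p) − β(p)(θ(p) − r)/σ ) ∂_p c + (β(p)²/2) ∂_{pp} c + κ ((θ(p) − r)/σ)² = 0 with c(T, ·) = 0. Then the partial derivative ∂_p c is bounded on [0,T) × (0,1). -/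

import Mathlib

open Filter Set Topology

/-- The estimated drift `θ(p) = (μ₁ - μ₂) p + μ₂`. -/
noncomputable def filterTheta (μ₁ μ₂ : ℝ) (p : ℝ) : ℝ := (μ₁ - μ₂) * p + μ₂

/-- The filter volatility `β(p) = ((μ₁ - μ₂)/σ) p (1 - p)`. -/
noncomputable def filterBeta (μ₁ μ₂ σ : ℝ) (p : ℝ) : ℝ := (μ₁ - μ₂) / σ * (p * (1 - p))

/-- `c` is a solution, `C^{1,2}` on `[0,T) × (0,1)` and continuous up to the boundary
`{T} × (0,1)`, of the degenerate Cauchy problem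
`∂_t c + (η(p) - β(p)(θ(p) - r)/σ) ∂_p c + (β(p)²/2) ∂_{pp} c + κ ((θ(p) - r)/σ)² = 0`
with terminal condition `c(T, ·) = 0`.  The functions `ct, cp, cpp` witness the
(continuous) partial derivatives `∂_t c`, `∂_p c`, `∂_{pp} c`. -/
def SolvesFirstCauchy (T r σ μ₁ μ₂ κ : ℝ) (η : ℝ → ℝ) (c : ℝ → ℝ → ℝ) : Prop :=
  ∃ ct cp cpp : ℝ → ℝ → ℝ,
    (∀ t ∈ Ico (0 : ℝ) T, ∀ p ∈ Ioo (0 : ℝ) 1,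
      HasDerivWithinAt (fun s => c s p) (ct t p) (Ico (0 : ℝ) T) t ∧
      HasDerivAt (fun q => c t q) (cp t p) p ∧
      HasDerivAt (fun q => cp t q) (cpp t p) p) ∧
    ContinuousOn (fun z : ℝ × ℝ => ct z.1 z.2) (Ico (0 : ℝ) T ×ˢ Ioo (0 : ℝ) 1) ∧
    ContinuousOn (fun z : ℝ × ℝ => cp z.1 z.2) (Ico (0 : ℝ) T ×ˢ Ioo (0 : ℝ) 1) ∧
    ContinuousOn (fun z : ℝ × ℝ => cpp z.1 z.2) (Ico (0 : ℝ) T ×ˢ Ioo (0 : ℝ) 1) ∧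
    ContinuousOn (fun z : ℝ × ℝ => c z.1 z.2) (Icc (0 : ℝ) T ×ˢ Ioo (0 : ℝ) 1) ∧
    (∀ t ∈ Ico (0 : ℝ) T, ∀ p ∈ Ioo (0 : ℝ) 1,
      ct t p
        + (η p - filterBeta μ₁ μ₂ σ p * ((filterTheta μ₁ μ₂ p - r) / σ)) * cp t p
        + filterBeta μ₁ μ₂ σ p ^ 2 / 2 * cpp t p
        + κ * ((filterTheta μ₁ μ₂ p - r) / σ) ^ 2 = 0) ∧
    (∀ p ∈ Ioo (0 : ℝ) 1, c T p = 0)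

/-- `η` is either identically `0` (unknown constant drift) or of the mean-reverting
form `η(p) = -(q₁ + q₂) p + q₂` with `q₁, q₂ > 0` (regime-switching drift). -/
def AdmissibleFilterDrift (η : ℝ → ℝ) : Prop :=
  (∀ p, η p = 0) ∨ ∃ q₁ q₂ : ℝ, 0 < q₁ ∧ 0 < q₂ ∧ ∀ p, η p = -(q₁ + q₂) * p + q₂

/-- The `p`-derivative of the (unique bounded) solution of the first degenerate Cauchy
problem is bounded on `[0,T) × (0,1)`. -/

noncomputable def phiPen (p : ℝ) : ℝ := -Real.log p - Real.log (1 - p)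

lemma phiPen_ge_one {p : ℝ} (hp : p ∈ Ioo (0:ℝ) 1) : 1 ≤ phiPen p := by
  obtain ⟨h0, h1⟩ := hp
  have hq : 0 < 1 - p := by linarith
  have hm : 0 < p * (1 - p) := mul_pos h0 hq
  have h4 : p * (1 - p) ≤ 1/4 := by nlinarith [sq_nonneg (p - 1/2)]
  have hlog : Real.log (p * (1 - p)) ≤ Real.log (1/4) :=
    (Real.log_le_log_iff hm (by norm_num)).2 h4
  rw [Real.log_mul (ne_of_gt h0) (ne_of_gt hq)] at hlog
  have h14 : Real.log (1/4) = - Real.log 4 := by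
    rw [one_div, Real.log_inv]
  have hlog4 : 1 ≤ Real.log 4 := by
    rw [Real.le_log_iff_exp_le (by norm_num : (0:ℝ) < 4)]
    have := Real.exp_one_lt_d9
    linarith
  unfold phiPen
  rw [h14] at hlog
  linarith

lemma phiPen_nonneg {p : ℝ} (hp : p ∈ Ioo (0:ℝ) 1) : 0 ≤ phiPen p :=
  le_trans zero_le_one (phiPen_ge_one hp)

lemma phiPen_ge_neg_log {p : ℝ} (hp : p ∈ Ioo (0:ℝ) 1) : -Real.log p ≤ phiPen p := by
  have h1 : 1 - p ≤ 1 := by linarith [hp.1]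
  have h0 : 0 < 1 - p := by linarith [hp.2]
  have : Real.log (1 - p) ≤ 0 := Real.log_nonpos h0.le h1
  unfold phiPen; linarith

lemma phiPen_ge_neg_log' {p : ℝ} (hp : p ∈ Ioo (0:ℝ) 1) : -Real.log (1-p) ≤ phiPen p := by
  have : Real.log p ≤ 0 := Real.log_nonpos hp.1.le hp.2.le
  unfold phiPen; linarith

lemma phiPen_hasDeriv {p : ℝ} (hp : p ∈ Ioo (0:ℝ) 1) :
    HasDerivAt phiPen (1/(1-p) - 1/p) p := by
  have h0 : p ≠ 0 := ne_of_gt hp.1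
  have h1 : (1:ℝ) - p ≠ 0 := by have := hp.2; intro h; linarith [sub_eq_zero.1 h]
  have d1 : HasDerivAt Real.log p⁻¹ p := Real.hasDerivAt_log h0
  have din : HasDerivAt (fun q : ℝ => 1 - q) (-1) p := by
    simpa using (hasDerivAt_id p).const_sub 1
  have d2 : HasDerivAt (fun q : ℝ => Real.log (1 - q)) ((1-p)⁻¹ * (-1)) p :=
    (Real.hasDerivAt_log h1).comp p din
  have := (d1.neg).sub d2
  exact this.congr_deriv (by ring)

lemma phiPen'_hasDeriv {p : ℝ} (hp : p ∈ Ioo (0:ℝ) 1) :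
    HasDerivAt (fun q : ℝ => 1/(1-q) - 1/q) (1/p^2 + 1/(1-p)^2) p := by
  have h0 : p ≠ 0 := ne_of_gt hp.1
  have h1 : (1:ℝ) - p ≠ 0 := by have := hp.2; intro h; linarith [sub_eq_zero.1 h]
  have din : HasDerivAt (fun q : ℝ => 1 - q) (-1) p := by
    simpa using (hasDerivAt_id p).const_sub 1
  have d1 : HasDerivAt (fun q : ℝ => (1-q)⁻¹) (-((1-p)^2)⁻¹ * (-1)) p :=
    (hasDerivAt_inv h1).comp p din
  have d2 : HasDerivAt (fun q : ℝ => q⁻¹) (-(p^2)⁻¹) p := hasDerivAt_inv h0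
  have := d1.sub d2
  simp only [one_div]
  exact this.congr_deriv (by ring)

lemma phiPen_continuousAt {p : ℝ} (hp : p ∈ Ioo (0:ℝ) 1) : ContinuousAt phiPen p := by
  have h0 : p ≠ 0 := ne_of_gt hp.1
  have h1 : (1:ℝ) - p ≠ 0 := by have := hp.2; intro h; linarith [sub_eq_zero.1 h]
  exact ((Real.continuousAt_log h0).neg).sub
    ((Real.continuousAt_log h1).comp (continuous_const.sub continuous_id).continuousAt)

lemma expT_hasDeriv (lam T t : ℝ) :
    HasDerivAt (fun s => Real.exp (lam*(T-s))) (-(lam * Real.exp (lam*(T-t)))) t := by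
  have din : HasDerivAt (fun s : ℝ => lam * (T - s)) (-lam) t := by
    simpa using ((hasDerivAt_id t).const_sub T).const_mul lam
  have := din.exp
  convert this using 1
  ring


/-- First and second order conditions at an interior maximum. -/
lemma max_first_second {g g' : ℝ → ℝ} {lo hi a d : ℝ} (h1 : lo < a) (h2 : a < hi)
    (hg : ∀ x ∈ Ioo lo hi, HasDerivAt g (g' x) x)
    (hmax : ∀ x ∈ Ioo lo hi, g x ≤ g a)
    (hd : HasDerivAt g' d a) : g' a = 0 ∧ d ≤ 0 := by
  have haI : a ∈ Ioo lo hi := ⟨h1, h2⟩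
  have hloc : IsLocalMax g a := by
    filter_upwards [Ioo_mem_nhds h1 h2] with x hx using hmax x hx
  have hz : g' a = 0 := hloc.hasDerivAt_eq_zero (hg a haI)
  refine ⟨hz, ?_⟩
  by_contra hpos
  push_neg at hpos
  -- hpos : 0 < d
  have hslope : Tendsto (slope g' a) (𝓝[≠] a) (𝓝 d) :=
    hasDerivAt_iff_tendsto_slope.1 hd
  have h3 : ∀ᶠ x in 𝓝[≠] a, 0 < slope g' a x :=
    hslope (Ioi_mem_nhds hpos)
  have h4 : ∀ᶠ x in 𝓝[>] a, 0 < slope g' a x ∧ x ∈ Ioo lo hi := by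
    have hA : ∀ᶠ x in 𝓝[>] a, 0 < slope g' a x :=
      h3.filter_mono (nhdsWithin_mono a (fun x hx => ne_of_gt hx))
    have hB : ∀ᶠ x in 𝓝[>] a, x ∈ Ioo lo hi :=
      mem_nhdsWithin_of_mem_nhds (Ioo_mem_nhds h1 h2)
    exact hA.and hB
  obtain ⟨u, hu, hsub⟩ := mem_nhdsGT_iff_exists_Ioo_subset.1 h4
  set b := (a + u) / 2 with hb
  have hab : a < b := by simp only [hb]; linarith [hu.out]
  have hbu : b < u := by simp only [hb]; linarith [hu.out]
  have hIcc : Icc a b ⊆ Ioo lo hi := by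
    intro x hx
    rcases eq_or_lt_of_le hx.1 with rfl | hax
    · exact haI
    · exact (hsub ⟨hax, lt_of_le_of_lt hx.2 hbu⟩).2
  have hmono : StrictMonoOn g (Icc a b) := by
    apply strictMonoOn_of_deriv_pos (convex_Icc a b)
    · intro x hx
      exact ((hg x (hIcc hx)).continuousAt).continuousWithinAt
    · intro x hx
      rw [interior_Icc] at hx
      have hxm : x ∈ Ioo a u := ⟨hx.1, lt_trans hx.2 hbu⟩
      have h5 := (hsub hxm).1
      have hxa : 0 < x - a := by linarith [hx.1]
      have : g' x = slope g' a x * (x - a) := by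
        rw [slope_def_field, hz]
        field_simp
        ring
      rw [(hg x (hIcc ⟨le_of_lt hx.1, le_of_lt hx.2⟩)).deriv]
      nlinarith [h5]
  have : g a < g b := hmono (left_mem_Icc.2 hab.le) (right_mem_Icc.2 hab.le) hab
  have hb' : b ∈ Ioo lo hi := hIcc (right_mem_Icc.2 hab.le)
  linarith [hmax b hb']

/-- One-sided (right) derivative nonpositivity at a maximum on `[0,T]` attained away from `T`. -/
lemma right_deriv_nonpos {h : ℝ → ℝ} {D a T : ℝ} (ha0 : 0 ≤ a) (haT : a < T)
    (hd : HasDerivWithinAt h D (Ico 0 T) a)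
    (hmax : ∀ t ∈ Icc 0 T, h t ≤ h a) : D ≤ 0 := by
  have hd' : HasDerivWithinAt h D (Ico a T) a :=
    hd.mono (Ico_subset_Ico ha0 le_rfl)
  have hslope : Tendsto (slope h a) (𝓝[Ico a T \ {a}] a) (𝓝 D) :=
    hasDerivWithinAt_iff_tendsto_slope.1 hd'
  have hset : Ico a T \ {a} = Ioo a T := by
    ext x
    simp only [mem_diff, mem_Ico, mem_singleton_iff, mem_Ioo]
    constructor
    · rintro ⟨⟨h1, h2⟩, h3⟩; exact ⟨lt_of_le_of_ne h1 (Ne.symm h3), h2⟩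
    · rintro ⟨h1, h2⟩; exact ⟨⟨h1.le, h2⟩, ne_of_gt h1⟩
  rw [hset] at hslope
  have hne : (𝓝[Ioo a T] a).NeBot := by
    apply mem_closure_iff_nhdsWithin_neBot.1
    rw [closure_Ioo (ne_of_lt haT)]
    exact left_mem_Icc.2 haT.le
  refine le_of_tendsto hslope ?_
  filter_upwards [self_mem_nhdsWithin] with x hx
  have h1 : h x ≤ h a := hmax x ⟨le_trans ha0 hx.1.le, hx.2.le⟩
  have h2 : 0 < x - a := by linarith [hx.1]
  rw [slope_def_field]
  exact div_nonpos_of_nonpos_of_nonneg (by linarith) (by linarith)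

set_option maxHeartbeats 1000000 in
theorem key (T : ℝ) (hT : 0 < T) (Aco Bco gco : ℝ → ℝ)
    (c ct cp cpp : ℝ → ℝ → ℝ) (LA Lf K KB M₀ : ℝ)
    (hLA : 0 ≤ LA) (hLf : 0 ≤ Lf) (hK : 0 ≤ K) (hKB : 0 ≤ KB) (hM0 : 0 ≤ M₀)
    (hder : ∀ t ∈ Ico (0:ℝ) T, ∀ p ∈ Ioo (0:ℝ) 1,
      HasDerivWithinAt (fun s => c s p) (ct t p) (Ico (0:ℝ) T) t ∧
      HasDerivAt (fun q => c t q) (cp t p) p ∧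
      HasDerivAt (fun q => cp t q) (cpp t p) p)
    (hcont : ContinuousOn (fun z : ℝ × ℝ => c z.1 z.2) (Icc (0:ℝ) T ×ˢ Ioo (0:ℝ) 1))
    (hpde : ∀ t ∈ Ico (0:ℝ) T, ∀ p ∈ Ioo (0:ℝ) 1,
      ct t p + Aco p * cp t p + Bco p * cpp t p + gco p = 0)
    (hterm : ∀ p ∈ Ioo (0:ℝ) 1, c T p = 0)
    (hbd : ∀ t ∈ Icc (0:ℝ) T, ∀ p ∈ Ioo (0:ℝ) 1, |c t p| ≤ M₀)
    (hBnn : ∀ p ∈ Ioo (0:ℝ) 1, 0 ≤ Bco p)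
    (hAl : ∀ p ∈ Ioo (0:ℝ) 1, ∀ q ∈ Ioo (0:ℝ) 1, q ≤ p → Aco p - Aco q ≤ LA * (p - q))
    (hgl : ∀ p ∈ Ioo (0:ℝ) 1, ∀ q ∈ Ioo (0:ℝ) 1, q ≤ p → gco p - gco q ≤ Lf * (p - q))
    (hApen : ∀ p ∈ Ioo (0:ℝ) 1, Aco p * (1/(1-p) - 1/p) ≤ K)
    (hBpen : ∀ p ∈ Ioo (0:ℝ) 1, Bco p * (1/p^2 + 1/(1-p)^2) ≤ KB) :
    ∀ t ∈ Icc (0:ℝ) T, ∀ p ∈ Ioo (0:ℝ) 1, ∀ q ∈ Ioo (0:ℝ) 1, q ≤ p →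
      c t p - c t q ≤ Real.exp ((LA + Lf) * T) * (p - q) := by
  set lam := LA + Lf with hlam
  set gam := K + KB + 1 with hgam
  have hlam0 : 0 ≤ lam := by linarith
  have hgam0 : 0 < gam := by linarith
  -- Step 1 : penalized inequality for every ε > 0
  have main : ∀ ε : ℝ, 0 < ε → ∀ t ∈ Icc (0:ℝ) T, ∀ p ∈ Ioo (0:ℝ) 1, ∀ q ∈ Ioo (0:ℝ) 1,
      q ≤ p → c t p - c t q ≤ (p - q) * Real.exp (lam*(T-t))
        + ε * ((phiPen p + phiPen q) * Real.exp (gam*(T-t))) := by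
    intro ε hε
    by_contra hcon
    push_neg at hcon
    obtain ⟨t₀, ht₀, p₀, hp₀, q₀, hq₀, hqp₀, hstrict⟩ := hcon
    -- the penalized function
    set F : ℝ × ℝ × ℝ → ℝ := fun z =>
      c z.1 z.2.1 - c z.1 z.2.2 - (z.2.1 - z.2.2) * Real.exp (lam*(T-z.1))
        - ε * ((phiPen z.2.1 + phiPen z.2.2) * Real.exp (gam*(T-z.1))) with hF
    set δ : ℝ := min q₀ (min (1 - p₀) (Real.exp (-(2*M₀+1)/ε))) with hδ
    have hδ0 : 0 < δ := by
      apply lt_min hq₀.1 (lt_min (by linarith [hp₀.2]) (Real.exp_pos _))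
    have hδq₀ : δ ≤ q₀ := min_le_left _ _
    have hδp₀ : p₀ ≤ 1 - δ := by
      have h : δ ≤ 1 - p₀ := le_trans (min_le_right _ _) (min_le_left _ _)
      linarith
    have hδe : δ ≤ Real.exp (-(2*M₀+1)/ε) :=
      (min_le_right q₀ _).trans (min_le_right (1-p₀) _)
    have hδhalf : δ ≤ 1 - δ := le_trans hδq₀ (le_trans hqp₀ hδp₀)
    have hδ1 : δ < 1 := by linarith
    have hIccsub : Icc δ (1-δ) ⊆ Ioo (0:ℝ) 1 := fun x hx =>
      ⟨lt_of_lt_of_le hδ0 hx.1, by have := hx.2; linarith⟩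
    -- basic exponential facts
    have hexpE : ∀ t ∈ Icc (0:ℝ) T, 1 ≤ Real.exp (gam*(T-t)) := by
      intro t ht
      apply Real.one_le_exp
      have : 0 ≤ T - t := by linarith [ht.2]
      positivity
    -- log bound from δ
    have hlogδ : (2*M₀+1)/ε ≤ -Real.log δ := by
      have h1 : Real.log δ ≤ Real.log (Real.exp (-(2*M₀+1)/ε)) :=
        (Real.log_le_log_iff hδ0 (Real.exp_pos _)).2 hδe
      rw [Real.log_exp, neg_div] at h1
      linarith
    -- smallness of F near the boundary
    have hsmall : ∀ t ∈ Icc (0:ℝ) T, ∀ p ∈ Ioo (0:ℝ) 1, ∀ q ∈ Ioo (0:ℝ) 1, q ≤ p →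
        (q ≤ δ ∨ 1 - δ ≤ p) → F (t, p, q) ≤ -1 := by
      intro t ht p hp q hq hqp hcase
      have hcd : c t p - c t q ≤ 2*M₀ := by
        have h1 := hbd t ht p hp
        have h2 := hbd t ht q hq
        rw [abs_le] at h1 h2
        linarith [h1.2, h2.1]
      have hterm1 : 0 ≤ (p - q) * Real.exp (lam*(T-t)) := by
        apply mul_nonneg (by linarith) (Real.exp_pos _).le
      have hw : (2*M₀+1)/ε + 1 ≤ phiPen p + phiPen q := by
        rcases hcase with hcase | hcase
        · have h1 : (2*M₀+1)/ε ≤ phiPen q := by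
            have h2 : Real.log q ≤ Real.log δ := (Real.log_le_log_iff hq.1 hδ0).2 hcase
            have := phiPen_ge_neg_log hq
            linarith
          linarith [phiPen_ge_one hp]
        · have h1 : (2*M₀+1)/ε ≤ phiPen p := by
            have h0 : (0:ℝ) < 1 - p := by linarith [hp.2]
            have h2 : Real.log (1-p) ≤ Real.log δ :=
              (Real.log_le_log_iff h0 hδ0).2 (by linarith)
            have := phiPen_ge_neg_log' hp
            linarith
          linarith [phiPen_ge_one hq]
      have hwpos : 0 ≤ phiPen p + phiPen q := by
        linarith [phiPen_nonneg hp, phiPen_nonneg hq]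
      have hE1 := hexpE t ht
      have hpen : 2*M₀ + 1 + ε ≤ ε * ((phiPen p + phiPen q) * Real.exp (gam*(T-t))) := by
        have h1 : phiPen p + phiPen q ≤ (phiPen p + phiPen q) * Real.exp (gam*(T-t)) := by
          nlinarith
        have h2 : ε * ((2*M₀+1)/ε + 1) ≤ ε * ((phiPen p + phiPen q) * Real.exp (gam*(T-t))) := by
          apply mul_le_mul_of_nonneg_left (by linarith) hε.le
        have h3 : ε * ((2*M₀+1)/ε + 1) = 2*M₀ + 1 + ε := by
          field_simp
        linarith
      simp only [hF]
      linarith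
    -- the compact set
    set S : Set (ℝ × ℝ × ℝ) :=
      (Icc (0:ℝ) T ×ˢ (Icc δ (1-δ) ×ˢ Icc δ (1-δ))) ∩ {z | z.2.2 ≤ z.2.1} with hS
    have hmemS : ∀ z : ℝ × ℝ × ℝ, z ∈ S ↔
        z.1 ∈ Icc (0:ℝ) T ∧ z.2.1 ∈ Icc δ (1-δ) ∧ z.2.2 ∈ Icc δ (1-δ) ∧ z.2.2 ≤ z.2.1 := by
      intro z
      simp only [hS, Set.mem_inter_iff, Set.mem_prod, Set.mem_setOf_eq]
      tauto
    have hScomp : IsCompact S := by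
      apply IsCompact.inter_right (isCompact_Icc.prod (isCompact_Icc.prod isCompact_Icc))
      exact isClosed_le (continuous_snd.snd) (continuous_snd.fst)
    have hz₀S : ((t₀, p₀, q₀) : ℝ × ℝ × ℝ) ∈ S := by
      rw [hmemS]
      refine ⟨ht₀, ⟨le_trans hδq₀ hqp₀, hδp₀⟩, ⟨hδq₀, le_trans hqp₀ hδp₀⟩, hqp₀⟩
    -- continuity of F on S
    have hFcont : ContinuousOn F S := by
      have hc1 : ContinuousOn (fun z : ℝ × ℝ × ℝ => c z.1 z.2.1) S := by
        apply hcont.comp (Continuous.continuousOn (continuous_fst.prodMk continuous_snd.fst))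
        intro z hz
        rw [hmemS] at hz
        exact ⟨hz.1, hIccsub hz.2.1⟩
      have hc2 : ContinuousOn (fun z : ℝ × ℝ × ℝ => c z.1 z.2.2) S := by
        apply hcont.comp (Continuous.continuousOn (continuous_fst.prodMk continuous_snd.snd))
        intro z hz
        rw [hmemS] at hz
        exact ⟨hz.1, hIccsub hz.2.2.1⟩
      have hphi : ContinuousOn phiPen (Ioo (0:ℝ) 1) := fun x hx =>
        (phiPen_continuousAt hx).continuousWithinAt
      have hc3 : ContinuousOn (fun z : ℝ × ℝ × ℝ => phiPen z.2.1) S := by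
        apply hphi.comp (continuous_snd.fst).continuousOn
        intro z hz
        rw [hmemS] at hz
        exact hIccsub hz.2.1
      have hc4 : ContinuousOn (fun z : ℝ × ℝ × ℝ => phiPen z.2.2) S := by
        apply hphi.comp (continuous_snd.snd).continuousOn
        intro z hz
        rw [hmemS] at hz
        exact hIccsub hz.2.2.1
      have hexp1 : Continuous (fun z : ℝ × ℝ × ℝ => Real.exp (lam*(T-z.1))) :=
        Real.continuous_exp.comp (continuous_const.mul (continuous_const.sub continuous_fst))
      have hexp2 : Continuous (fun z : ℝ × ℝ × ℝ => Real.exp (gam*(T-z.1))) :=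
        Real.continuous_exp.comp (continuous_const.mul (continuous_const.sub continuous_fst))
      exact ((hc1.sub hc2).sub
        (((continuous_snd.fst.sub continuous_snd.snd).continuousOn).mul hexp1.continuousOn)).sub
        (continuousOn_const.mul ((hc3.add hc4).mul hexp2.continuousOn))
    -- extract the maximum point
    obtain ⟨zb, hzbS, hzbmax⟩ := hScomp.exists_isMaxOn ⟨(t₀,p₀,q₀), hz₀S⟩ hFcont
    obtain ⟨tb, pb, qb⟩ := zb
    have hmax : ∀ z ∈ S, F z ≤ F (tb, pb, qb) := fun z hz => hzbmax hz
    have hFb : 0 < F (tb, pb, qb) := by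
      have h1 := hmax (t₀,p₀,q₀) hz₀S
      have h2 : 0 < F (t₀,p₀,q₀) := by
        simp only [hF]
        linarith
      linarith
    have hzb := (hmemS (tb,pb,qb)).1 hzbS
    have htb : tb ∈ Icc (0:ℝ) T := hzb.1
    have hpbc : pb ∈ Icc δ (1-δ) := hzb.2.1
    have hqbc : qb ∈ Icc δ (1-δ) := hzb.2.2.1
    have hqpb : qb ≤ pb := hzb.2.2.2
    have hpbI : pb ∈ Ioo (0:ℝ) 1 := hIccsub hpbc
    have hqbI : qb ∈ Ioo (0:ℝ) 1 := hIccsub hqbc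
    set expL := Real.exp (lam*(T-tb)) with hexpLdef
    set expE := Real.exp (gam*(T-tb)) with hexpEdef
    have hexpL0 : 0 < expL := Real.exp_pos _
    have hexpE0 : 0 < expE := Real.exp_pos _
    have hwb : 2 ≤ phiPen pb + phiPen qb := by
      linarith [phiPen_ge_one hpbI, phiPen_ge_one hqbI]
    -- exclusions
    have htbT : tb < T := by
      rcases lt_or_ge tb T with h | h
      · exact h
      · exfalso
        have htbT' : tb = T := le_antisymm htb.2 h
        have hcd : c tb pb - c tb qb = 0 := by
          rw [htbT', hterm pb hpbI, hterm qb hqbI]; ring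
        have h1 : 0 ≤ (pb - qb) * expL :=
          mul_nonneg (by linarith) hexpL0.le
        have h2 : 0 < ε * ((phiPen pb + phiPen qb) * expE) := by
          apply mul_pos hε (mul_pos (by linarith) hexpE0)
        simp only [hF] at hFb
        linarith
    have htI : tb ∈ Ico (0:ℝ) T := ⟨htb.1, htbT⟩
    have hqbδ : δ < qb := by
      rcases lt_or_ge δ qb with h | h
      · exact h
      · exfalso
        have := hsmall tb htb pb hpbI qb hqbI hqpb (Or.inl h)
        linarith
    have hpbδ : pb < 1 - δ := by
      rcases lt_or_ge pb (1-δ) with h | h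
      · exact h
      · exfalso
        have := hsmall tb htb pb hpbI qb hqbI hqpb (Or.inr h)
        linarith
    have hqpb' : qb < pb := by
      rcases lt_or_ge qb pb with h | h
      · exact h
      · exfalso
        have hqe : qb = pb := le_antisymm hqpb h
        have h2 : 0 < ε * ((phiPen pb + phiPen pb) * Real.exp (gam * (T - tb))) :=
          mul_pos hε (mul_pos (by linarith [phiPen_ge_one hpbI]) (Real.exp_pos _))
        simp only [hF] at hFb
        rw [hqe] at hFb
        linarith
    -- t-direction : one-sided derivative at the max
    have hIt : ct tb pb - ct tb qb + (pb - qb) * (lam * expL)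
        + ε * ((phiPen pb + phiPen qb) * (gam * expE)) ≤ 0 := by
      have h1 := (hder tb htI pb hpbI).1
      have h2 := (hder tb htI qb hqbI).1
      have h3 : HasDerivWithinAt
          (fun t => (pb - qb) * Real.exp (lam*(T-t)))
          ((pb - qb) * (-(lam * Real.exp (lam*(T-tb))))) (Ico (0:ℝ) T) tb :=
        (((expT_hasDeriv lam T tb).const_mul (pb - qb))).hasDerivWithinAt
      have h4 : HasDerivWithinAt
          (fun t => ε * ((phiPen pb + phiPen qb) * Real.exp (gam*(T-t))))
          (ε * ((phiPen pb + phiPen qb) * (-(gam * Real.exp (gam*(T-tb)))))) (Ico (0:ℝ) T) tb := by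
        exact ((((expT_hasDeriv gam T tb).const_mul (phiPen pb + phiPen qb))).const_mul ε).hasDerivWithinAt
      have hde : HasDerivWithinAt (fun t => F (t, pb, qb))
          (ct tb pb - ct tb qb - (pb - qb) * (-(lam * expL))
            - ε * ((phiPen pb + phiPen qb) * (-(gam * expE)))) (Ico (0:ℝ) T) tb := by
        simp only [hF]
        exact ((h1.sub h2).sub h3).sub h4
      have hmaxt : ∀ t ∈ Icc (0:ℝ) T, (fun t => F (t, pb, qb)) t ≤ (fun t => F (t, pb, qb)) tb := by
        intro t ht
        apply hmax
        rw [hmemS]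
        exact ⟨ht, hpbc, hqbc, hqpb⟩
      have := right_deriv_nonpos htb.1 htbT hde hmaxt
      linarith
    -- p-direction
    have hGp := max_first_second (g := fun p => F (tb, p, qb))
        (g' := fun p => cp tb p - expL - ε * ((1/(1-p) - 1/p) * expE))
        hqpb' hpbδ
        (by
          intro x hx
          have hxI : x ∈ Ioo (0:ℝ) 1 :=
            ⟨lt_trans hδ0 (lt_trans hqbδ hx.1), by have := hx.2; linarith⟩
          have h1 := (hder tb htI x hxI).2.1
          have h2 : HasDerivAt (fun p : ℝ => (p - qb) * expL) expL x := by
            simpa using ((hasDerivAt_id x).sub_const qb).mul_const expL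
          have h3 : HasDerivAt (fun p : ℝ => ε * ((phiPen p + phiPen qb) * expE))
              (ε * ((1/(1-x) - 1/x) * expE)) x := by
            exact (((phiPen_hasDeriv hxI).add_const (phiPen qb)).mul_const expE).const_mul ε
          simp only [hF]
          exact (((h1.sub_const (c tb qb)).sub h2).sub h3)
        )
        (by
          intro x hx
          apply hmax
          rw [hmemS]
          refine ⟨htb, ⟨?_, hx.2.le⟩, hqbc, hx.1.le⟩
          linarith [hqbc.1, hx.1]
        )
        (by
          have h1 := (hder tb htI pb hpbI).2.2
          have h2 : HasDerivAt (fun p : ℝ => ε * ((1/(1-p) - 1/p) * expE))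
              (ε * ((1/pb^2 + 1/(1-pb)^2) * expE)) pb :=
            ((phiPen'_hasDeriv hpbI).mul_const expE).const_mul ε
          show HasDerivAt _ (cpp tb pb - ε * ((1/pb^2 + 1/(1-pb)^2) * expE)) pb
          exact ((h1.sub_const expL).sub h2)
        )
    -- q-direction
    have hGq := max_first_second (g := fun q => F (tb, pb, q))
        (g' := fun q => -cp tb q + expL - ε * ((1/(1-q) - 1/q) * expE))
        hqbδ hqpb'
        (by
          intro x hx
          have hxI : x ∈ Ioo (0:ℝ) 1 :=
            ⟨lt_trans hδ0 hx.1, lt_trans (lt_trans hx.2 hpbδ) (by linarith)⟩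
          have h1 := (hder tb htI x hxI).2.1
          have h2 : HasDerivAt (fun q : ℝ => (pb - q) * expL) (-expL) x := by
            simpa using ((hasDerivAt_id x).const_sub pb).mul_const expL
          have h3 : HasDerivAt (fun q : ℝ => ε * ((phiPen pb + phiPen q) * expE))
              (ε * ((1/(1-x) - 1/x) * expE)) x := by
            exact (((phiPen_hasDeriv hxI).const_add (phiPen pb)).mul_const expE).const_mul ε
          simp only [hF]
          have h4 := ((h1.const_sub (c tb pb)).sub h2).sub h3
          exact h4.congr_deriv (by ring)
        )
        (by
          intro x hx
          apply hmax
          rw [hmemS]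
          refine ⟨htb, hpbc, ⟨hx.1.le, ?_⟩, hx.2.le⟩
          linarith [hx.2]
        )
        (by
          have h1 := (hder tb htI qb hqbI).2.2
          have h2 : HasDerivAt (fun q : ℝ => ε * ((1/(1-q) - 1/q) * expE))
              (ε * ((1/qb^2 + 1/(1-qb)^2) * expE)) qb :=
            ((phiPen'_hasDeriv hqbI).mul_const expE).const_mul ε
          show HasDerivAt _ (-cpp tb qb - ε * ((1/qb^2 + 1/(1-qb)^2) * expE)) qb
          have h3 := ((h1.neg.add_const expL).sub h2)
          exact h3.congr_deriv (by ring)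
        )
    obtain ⟨hfop, hsop⟩ := hGp
    obtain ⟨hfoq, hsoq⟩ := hGq
    -- collect all the inequalities and derive a contradiction
    have e1 := hpde tb htI pb hpbI
    have e2 := hpde tb htI qb hqbI
    have e4 : cp tb pb = expL + ε * ((1/(1-pb) - 1/pb) * expE) := by linarith [hfop]
    have e5 : cp tb qb = expL - ε * ((1/(1-qb) - 1/qb) * expE) := by linarith [hfoq]
    have i6 : cpp tb pb ≤ ε * ((1/pb^2 + 1/(1-pb)^2) * expE) := by linarith [hsop]
    have i7 : -cpp tb qb ≤ ε * ((1/qb^2 + 1/(1-qb)^2) * expE) := by linarith [hsoq]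
    have i8 := hAl pb hpbI qb hqbI hqpb
    have i9 := hgl pb hpbI qb hqbI hqpb
    have i10 := hApen pb hpbI
    have i11 := hApen qb hqbI
    have i12 := hBpen pb hpbI
    have i13 := hBpen qb hqbI
    have iBp := hBnn pb hpbI
    have iBq := hBnn qb hqbI
    have iL : 1 ≤ expL :=
      Real.one_le_exp (mul_nonneg hlam0 (by linarith [htb.2]))
    -- now derive the contradiction
    set f1 := 1/(1-pb) - 1/pb with hf1
    set f2 := 1/(1-qb) - 1/qb with hf2
    set g1 := 1/pb^2 + 1/(1-pb)^2 with hg1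
    set g2 := 1/qb^2 + 1/(1-qb)^2 with hg2
    have q1 : Aco pb * cp tb pb = Aco pb * expL + ε * (Aco pb * f1) * expE := by
      rw [e4]; ring
    have q2 : Aco qb * cp tb qb = Aco qb * expL - ε * (Aco qb * f2) * expE := by
      rw [e5]; ring
    have q3 : ε * (Aco pb * f1) * expE ≤ ε * K * expE := by
      have h1 : Aco pb * f1 * expE ≤ K * expE :=
        mul_le_mul_of_nonneg_right i10 hexpE0.le
      have h2 : ε * (Aco pb * f1 * expE) ≤ ε * (K * expE) :=
        mul_le_mul_of_nonneg_left h1 hε.le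
      linarith
    have q4 : ε * (Aco qb * f2) * expE ≤ ε * K * expE := by
      have h1 : Aco qb * f2 * expE ≤ K * expE :=
        mul_le_mul_of_nonneg_right i11 hexpE0.le
      have h2 : ε * (Aco qb * f2 * expE) ≤ ε * (K * expE) :=
        mul_le_mul_of_nonneg_left h1 hε.le
      linarith
    have q5 : (Aco pb - Aco qb) * expL ≤ LA * (pb - qb) * expL :=
      mul_le_mul_of_nonneg_right i8 hexpL0.le
    have q6 : Bco pb * cpp tb pb ≤ ε * KB * expE := by
      have h1 : Bco pb * cpp tb pb ≤ Bco pb * (ε * (g1 * expE)) :=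
        mul_le_mul_of_nonneg_left i6 iBp
      have h2 : Bco pb * g1 * expE ≤ KB * expE :=
        mul_le_mul_of_nonneg_right i12 hexpE0.le
      have h3 : ε * (Bco pb * g1 * expE) ≤ ε * (KB * expE) :=
        mul_le_mul_of_nonneg_left h2 hε.le
      linarith
    have q7 : -(Bco qb * cpp tb qb) ≤ ε * KB * expE := by
      have h1 : Bco qb * (-cpp tb qb) ≤ Bco qb * (ε * (g2 * expE)) :=
        mul_le_mul_of_nonneg_left i7 iBq
      have h2 : Bco qb * g2 * expE ≤ KB * expE :=
        mul_le_mul_of_nonneg_right i13 hexpE0.le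
      have h3 : ε * (Bco qb * g2 * expE) ≤ ε * (KB * expE) :=
        mul_le_mul_of_nonneg_left h2 hε.le
      linarith
    have q8 : Lf * (pb - qb) ≤ Lf * (pb - qb) * expL := by
      have h0 : 0 ≤ Lf * (pb - qb) := mul_nonneg hLf (by linarith)
      have h1 : Lf * (pb - qb) * 1 ≤ Lf * (pb - qb) * expL :=
        mul_le_mul_of_nonneg_left iL h0
      linarith
    have q9 : ε * (2 * gam) * expE ≤ ε * ((phiPen pb + phiPen qb) * (gam * expE)) := by
      have h1 : 2 * gam ≤ (phiPen pb + phiPen qb) * gam :=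
        mul_le_mul_of_nonneg_right hwb hgam0.le
      have h2 : (2 * gam) * expE ≤ ((phiPen pb + phiPen qb) * gam) * expE :=
        mul_le_mul_of_nonneg_right h1 hexpE0.le
      have h3 : ε * ((2 * gam) * expE) ≤ ε * (((phiPen pb + phiPen qb) * gam) * expE) :=
        mul_le_mul_of_nonneg_left h2 hε.le
      linarith
    have q10 : 0 < ε * expE := mul_pos hε hexpE0
    have hb1 : (pb - qb) * (lam * expL)
        = LA * (pb - qb) * expL + Lf * (pb - qb) * expL := by
      rw [hlam]; ring
    have hb3 : ε * (2 * gam) * expE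
        = 2 * (ε * K * expE) + 2 * (ε * KB * expE) + 2 * (ε * expE) := by
      rw [hgam]; ring
    linarith [hIt, e1, e2, q1, q2, q3, q4, q5, q6, q7, q8, q9, q10, i9, hb1, hb3]
  -- Step 2 : let ε → 0
  intro t ht p hp q hq hqp
  have hw0 : 0 < (phiPen p + phiPen q) * Real.exp (gam*(T-t)) :=
    mul_pos (by linarith [phiPen_ge_one hp, phiPen_ge_one hq]) (Real.exp_pos _)
  have hLip : c t p - c t q ≤ (p - q) * Real.exp (lam*(T-t)) := by
    by_contra hcon
    push_neg at hcon
    have hd0 : 0 < c t p - c t q - (p - q) * Real.exp (lam*(T-t)) := by linarith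
    have hkey := main ((c t p - c t q - (p - q) * Real.exp (lam*(T-t)))
        / (2*((phiPen p + phiPen q) * Real.exp (gam*(T-t)))))
      (div_pos hd0 (by linarith)) t ht p hp q hq hqp
    have heq : (c t p - c t q - (p - q) * Real.exp (lam*(T-t)))
        / (2*((phiPen p + phiPen q) * Real.exp (gam*(T-t))))
        * ((phiPen p + phiPen q) * Real.exp (gam*(T-t)))
        = (c t p - c t q - (p - q) * Real.exp (lam*(T-t))) / 2 := by
      have hne : phiPen p + phiPen q ≠ 0 := ne_of_gt (by linarith [phiPen_ge_one hp, phiPen_ge_one hq])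
      field_simp
    linarith
  have h1 : Real.exp (lam*(T-t)) ≤ Real.exp (lam*T) := by
    apply Real.exp_le_exp.2
    have := mul_nonneg hlam0 ht.1
    nlinarith
  have h2 : (p - q) * Real.exp (lam*(T-t)) ≤ (p - q) * Real.exp (lam*T) :=
    mul_le_mul_of_nonneg_left h1 (by linarith)
  have hfin : Real.exp (lam * T) * (p - q) = (p - q) * Real.exp (lam*T) := by ring
  rw [hlam] at h2 ⊢
  linarith


set_option maxHeartbeats 3200000 in
theorem first_cauchy_problem_deriv_bounded (T r σ μ₁ μ₂ κ : ℝ) (η : ℝ → ℝ)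
    (hT : 0 < T) (hσ : 0 < σ) (hμ : μ₂ < μ₁) (hκ : 0 < κ)
    (hη : AdmissibleFilterDrift η)
    (c : ℝ → ℝ → ℝ) (hc : SolvesFirstCauchy T r σ μ₁ μ₂ κ η c)
    (hbdd : ∃ M : ℝ, ∀ t ∈ Icc (0 : ℝ) T, ∀ p ∈ Ioo (0 : ℝ) 1, |c t p| ≤ M) :
    ∃ M : ℝ, ∀ t ∈ Ico (0 : ℝ) T, ∀ p ∈ Ioo (0 : ℝ) 1,
      |deriv (fun q => c t q) p| ≤ M := by
  classical
  obtain ⟨ct, cp, cpp, hder, _, _, _, hcont, hpde, hterm⟩ := hc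
  obtain ⟨M₀', hbd'⟩ := hbdd
  set M₀ := max M₀' 0 with hM₀def
  have hM0 : 0 ≤ M₀ := le_max_right _ _
  have hbd : ∀ t ∈ Icc (0:ℝ) T, ∀ p ∈ Ioo (0:ℝ) 1, |c t p| ≤ M₀ :=
    fun t ht p hp => le_trans (hbd' t ht p hp) (le_max_left _ _)
  set Δ := μ₁ - μ₂ with hΔ
  have hΔ0 : 0 < Δ := by simp only [hΔ]; linarith
  set a := Δ^2/σ^2 with ha
  set b := Δ*(μ₂ - r)/σ^2 with hb
  set babs := |b| with hbabs
  set mabs := |μ₂ - r| with hmabs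
  have ha0 : 0 < a := by positivity
  have hbb : -babs ≤ b ∧ b ≤ babs := ⟨neg_abs_le b, le_abs_self b⟩
  have hmm : -mabs ≤ μ₂ - r ∧ μ₂ - r ≤ mabs := ⟨neg_abs_le _, le_abs_self _⟩
  set Aco : ℝ → ℝ := fun p => η p - filterBeta μ₁ μ₂ σ p * ((filterTheta μ₁ μ₂ p - r) / σ) with hAco
  set Bco : ℝ → ℝ := fun p => filterBeta μ₁ μ₂ σ p ^ 2 / 2 with hBco
  set gco : ℝ → ℝ := fun p => κ * ((filterTheta μ₁ μ₂ p - r) / σ) ^ 2 with hgco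
  obtain ⟨Kη, hKη0, hηmono, hηpen⟩ :
      ∃ Kη : ℝ, 0 ≤ Kη ∧ (∀ p q : ℝ, q ≤ p → η p - η q ≤ 0) ∧
        (∀ p ∈ Ioo (0:ℝ) 1, η p * (1/(1-p) - 1/p) ≤ Kη) := by
    rcases hη with h0 | ⟨q₁, q₂, hq₁, hq₂, hform⟩
    · exact ⟨0, le_rfl, fun p q _ => by rw [h0 p, h0 q]; norm_num,
        fun p _ => by rw [h0 p]; norm_num⟩
    · refine ⟨q₁ + q₂, by linarith, fun p q hqp => by rw [hform p, hform q]; nlinarith, ?_⟩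
      intro p hp
      obtain ⟨hp0, hp1⟩ := hp
      have h1p : (0:ℝ) < 1 - p := by linarith
      have he : 1/(1-p) - 1/p = (2*p-1)/(p*(1-p)) := by
        field_simp
        ring
      rw [hform p, he, ← mul_div_assoc, div_le_iff₀ (by positivity)]
      nlinarith [mul_nonneg hq₁.le (sq_nonneg p), mul_nonneg hq₂.le (sq_nonneg (1-p))]
  have hAid : ∀ p : ℝ, Aco p = η p - a*(p^2*(1-p)) - b*(p*(1-p)) := by
    intro p
    simp only [hAco, filterBeta, filterTheta, ha, hb, hΔ]
    field_simp
    ring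
  have hgid : ∀ p : ℝ, gco p = κ/σ^2 * ((μ₁-μ₂)*p + μ₂ - r)^2 := by
    intro p
    simp only [hgco, filterTheta]
    field_simp
    try ring
  set LA := 3*a + babs with hLA
  have hLA0 : 0 ≤ LA := by simp only [hLA]; positivity
  have hAlip : ∀ p ∈ Ioo (0:ℝ) 1, ∀ q ∈ Ioo (0:ℝ) 1, q ≤ p → Aco p - Aco q ≤ LA * (p - q) := by
    intro p hp q hq hqp
    rw [hAid p, hAid q, hLA]
    have h1 := hηmono p q hqp
    have hu : 0 ≤ (p + q - p^2 - p*q - q^2) + 3 := by nlinarith [hp.1, hp.2, hq.1, hq.2]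
    have hint1 : 0 ≤ a * ((p - q) * ((p + q - p^2 - p*q - q^2) + 3)) :=
      mul_nonneg ha0.le (mul_nonneg (by linarith) hu)
    have hint2 : 0 ≤ (babs + b) * ((p - q) * (1 + (1 - p - q))) :=
      mul_nonneg (by linarith [hbb.1]) (mul_nonneg (by linarith)
        (by nlinarith [hp.2, hq.1]))
    have hint3 : 0 ≤ (babs - b) * ((p - q) * (1 - (1 - p - q))) :=
      mul_nonneg (by linarith [hbb.2]) (mul_nonneg (by linarith)
        (by nlinarith [hp.1, hq.1]))
    linarith [hint1, hint2, hint3]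
  set K := Kη + a + babs with hK
  have hK0 : 0 ≤ K := by simp only [hK]; positivity
  have hApen : ∀ p ∈ Ioo (0:ℝ) 1, Aco p * (1/(1-p) - 1/p) ≤ K := by
    intro p hp
    obtain ⟨hp0, hp1⟩ := hp
    have h1p : (0:ℝ) < 1 - p := by linarith
    have hpen : Aco p * (1/(1-p) - 1/p)
        = η p * (1/(1-p) - 1/p) - (a*p + b)*(2*p-1) := by
      rw [hAid p]
      field_simp
      ring
    rw [hpen, hK]
    have h2 := hηpen p ⟨hp0, hp1⟩
    have hint1 : 0 ≤ a * (1 - p + 2*p^2) := mul_nonneg ha0.le (by nlinarith [sq_nonneg p])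
    have hint2 : 0 ≤ (babs + b) * (2*p) := mul_nonneg (by linarith [hbb.1]) (by linarith)
    have hint3 : 0 ≤ (babs - b) * (2 - 2*p) := mul_nonneg (by linarith [hbb.2]) (by linarith)
    linarith [hint1, hint2, hint3]
  set KB := a/2 with hKB
  have hKB0 : 0 ≤ KB := by simp only [hKB]; positivity
  have hBpen : ∀ p ∈ Ioo (0:ℝ) 1, Bco p * (1/p^2 + 1/(1-p)^2) ≤ KB := by
    intro p hp
    obtain ⟨hp0, hp1⟩ := hp
    have h1p : (0:ℝ) < 1 - p := by linarith
    have hid : Bco p * (1/p^2 + 1/(1-p)^2) = a * ((1-p)^2 + p^2) / 2 := by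
      simp only [hBco, filterBeta, ha, hΔ]
      field_simp
    rw [hid, hKB]
    have : 0 ≤ a * (2*p*(1-p)) := mul_nonneg ha0.le (by nlinarith)
    linarith
  have hBnn : ∀ p ∈ Ioo (0:ℝ) 1, 0 ≤ Bco p := by
    intro p _
    simp only [hBco]
    positivity
  set Lf := κ/σ^2 * Δ * (2*Δ + 2*mabs) with hLf
  have hLf0 : 0 ≤ Lf := by
    apply mul_nonneg (mul_nonneg (div_nonneg hκ.le (sq_nonneg σ)) hΔ0.le)
    have := abs_nonneg (μ₂ - r)
    simp only [hmabs]
    linarith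
  have hglip : ∀ p ∈ Ioo (0:ℝ) 1, ∀ q ∈ Ioo (0:ℝ) 1, q ≤ p →
      |gco p - gco q| ≤ Lf * (p - q) := by
    intro p hp q hq hqp
    have hgdiff : gco p - gco q = (κ/σ^2*Δ*(p - q)) * (Δ*(p+q) + 2*(μ₂ - r)) := by
      rw [hgid p, hgid q, hΔ]
      ring
    have hc0 : 0 ≤ κ/σ^2*Δ*(p-q) :=
      mul_nonneg (mul_nonneg (div_nonneg hκ.le (sq_nonneg σ)) hΔ0.le) (by linarith)
    have hXub : Δ*(p+q) + 2*(μ₂-r) ≤ 2*Δ + 2*mabs := by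
      nlinarith [hmm.2, hp.2, hq.2, hΔ0]
    have hXlb : -(2*Δ + 2*mabs) ≤ Δ*(p+q) + 2*(μ₂-r) := by
      nlinarith [hmm.1, hp.1, hq.1, hΔ0]
    have hu := mul_le_mul_of_nonneg_left hXub hc0
    have hl := mul_le_mul_of_nonneg_left hXlb hc0
    have hbridge : Lf * (p - q) = (κ/σ^2*Δ*(p-q)) * (2*Δ+2*mabs) := by
      rw [hLf]; ring
    rw [abs_le]
    constructor
    · linarith [hgdiff, hl, hbridge]
    · linarith [hgdiff, hu, hbridge]
  -- apply the comparison lemma to c and -c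
  have hupper := key T hT Aco Bco gco c ct cp cpp LA Lf K KB M₀
    hLA0 hLf0 hK0 hKB0 hM0 hder hcont hpde hterm hbd hBnn hAlip
    (fun p hp q hq hqp => le_trans (le_abs_self _) (hglip p hp q hq hqp))
    hApen hBpen
  have hlower := key T hT Aco Bco (fun p => -gco p)
    (fun t p => -c t p) (fun t p => -ct t p) (fun t p => -cp t p) (fun t p => -cpp t p)
    LA Lf K KB M₀ hLA0 hLf0 hK0 hKB0 hM0
    (by
      intro t ht p hp
      obtain ⟨h1, h2, h3⟩ := hder t ht p hp
      exact ⟨h1.neg, h2.neg, h3.neg⟩)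
    hcont.neg
    (by
      intro t ht p hp
      have h := hpde t ht p hp
      simp only [hAco, hBco, hgco]
      linarith)
    (by
      intro p hp
      rw [hterm p hp]
      ring)
    (by
      intro t ht p hp
      rw [abs_neg]
      exact hbd t ht p hp)
    hBnn hAlip
    (by
      intro p hp q hq hqp
      have h := (abs_le.1 (hglip p hp q hq hqp)).1
      linarith)
    hApen hBpen
  set Mb := Real.exp ((LA + Lf) * T) with hMb
  have hLipAbs : ∀ t ∈ Icc (0:ℝ) T, ∀ x ∈ Ioo (0:ℝ) 1, ∀ y ∈ Ioo (0:ℝ) 1,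
      |c t x - c t y| ≤ Mb * |x - y| := by
    intro t ht x hx y hy
    rcases le_total y x with hxy | hxy
    · rw [abs_of_nonneg (show (0:ℝ) ≤ x - y by linarith), abs_le]
      constructor
      · have := hlower t ht x hx y hy hxy
        linarith
      · exact hupper t ht x hx y hy hxy
    · rw [abs_of_nonpos (show x - y ≤ (0:ℝ) by linarith), abs_le]
      constructor
      · have := hupper t ht y hy x hx hxy
        linarith
      · have := hlower t ht y hy x hx hxy
        linarith
  refine ⟨Mb, ?_⟩
  intro t ht p hp
  have hda : HasDerivAt (fun q => c t q) (cp t p) p := (hder t ht p hp).2.1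
  rw [hda.deriv]
  have hslope := hasDerivAt_iff_tendsto_slope.1 hda
  have habs : Tendsto (fun x => |slope (fun q => c t q) p x|) (𝓝[≠] p) (𝓝 |cp t p|) :=
    hslope.abs
  apply le_of_tendsto habs
  filter_upwards [mem_nhdsWithin_of_mem_nhds (Ioo_mem_nhds hp.1 hp.2),
    self_mem_nhdsWithin] with x hx hxp
  have hxne : x ≠ p := hxp
  have hpos : 0 < |x - p| := abs_pos.2 (sub_ne_zero.2 hxne)
  rw [slope_def_field, div_eq_mul_inv, ← div_eq_mul_inv, abs_div]
  rw [div_le_iff₀ hpos]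
  exact hLipAbs t ⟨ht.1, ht.2.le⟩ x hx p hp
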